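/- arXiv:1411.3429 — 5 statements merged into one kernel-verified Lean document; each statement's English description precedes it below -/
import Mathlib

section
/- Let M be a v×v matrix over ℂ with eigenvalue structure: eigenvalue τ₁ with multiplicity 1, τ₂ with multiplicity m₂, τ₃ with multiplicity m₃, where 1 + m₂ + m₃ = v, and let P be a permutation matrix of prime order p commuting with M, diagonalizable simultaneously with M, such that the all-ones vector is an eigenvector of both P (eigenvalue 1) and M (eigenvalue τ₁). If a₁ denotes the number of common eigenvectors in a common eigenbasis with P-eigenvalue 1 and M-eigenvalue τ₂, and a_p the number with P-eigenvalue a fixed primitive p-th root of unity and M-eigenvalue τ₂ (independent of the choice of primitive root when the τᵢ are distinct rationals), then trace(PM) = τ₁ + (a₁ - a_p)τ₂ + (b₁ - b_p)τ₃ where b₁, b_p are the analogous counts for τ₃. -/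
open Matrix

private lemma key_sum {v p : ℕ} (hp : p.Prime) {ζ : ℂ} (hζ : IsPrimitiveRoot ζ p)
    (μP : Fin v → ℂ) (hroot : ∀ i : Fin v, μP i ^ p = 1) (T : Finset (Fin v)) (a ap : ℕ)
    (ha : a = (T.filter (fun i => μP i = 1)).card)
    (hap : ∀ ξ : ℂ, IsPrimitiveRoot ξ p → ap = (T.filter (fun i => μP i = ξ)).card) :
    ∑ i ∈ T, μP i = (a : ℂ) - ap := by
  haveI : NeZero p := ⟨hp.ne_zero⟩
  choose g hg hgeq using fun i => hζ.eq_pow_of_pow_eq_one (hroot i)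
  have hmaps : ∀ i ∈ T, g i ∈ Finset.range p := fun i _ => Finset.mem_range.2 (hg i)
  have hfiber : ∀ k, k < p →
      T.filter (fun i => g i = k) = T.filter (fun i => μP i = ζ ^ k) := by
    intro k hk
    ext i
    simp only [Finset.mem_filter, and_congr_right_iff]
    intro _
    constructor
    · rintro rfl; exact (hgeq i).symm
    · intro h; exact hζ.pow_inj (hg i) hk ((hgeq i).trans h)
  have hcard : ∀ k, k < p →
      ((T.filter (fun i => g i = k)).card : ℂ) = if k = 0 then (a : ℂ) else (ap : ℂ) := by
    intro k hk
    rw [hfiber k hk]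
    by_cases h0 : k = 0
    · subst h0
      simp only [pow_zero, if_true, ha]
    · rw [if_neg h0]
      have hdvd : ¬ p ∣ k := Nat.not_dvd_of_pos_of_lt (Nat.pos_of_ne_zero h0) hk
      have hprim : IsPrimitiveRoot (ζ ^ k) p :=
        hζ.pow_of_coprime k ((hp.coprime_iff_not_dvd.mpr hdvd).symm)
      exact_mod_cast congrArg (Nat.cast : ℕ → ℂ) (hap (ζ ^ k) hprim).symm
  rw [← Finset.sum_fiberwise_of_maps_to hmaps (fun i => μP i)]
  have hterm : ∀ k ∈ Finset.range p, (∑ i ∈ T.filter (fun i => g i = k), μP i)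
      = (ap : ℂ) * ζ ^ k + (if k = 0 then (a : ℂ) - ap else 0) := by
    intro k hk
    have hk' := Finset.mem_range.1 hk
    have : (∑ i ∈ T.filter (fun i => g i = k), μP i)
        = ((T.filter (fun i => g i = k)).card : ℂ) * ζ ^ k := by
      rw [hfiber k hk']
      rw [Finset.sum_congr rfl (fun i hi => (Finset.mem_filter.1 hi).2), Finset.sum_const,
        nsmul_eq_mul]
    rw [this, hcard k hk']
    by_cases h0 : k = 0
    · subst h0; simp
    · simp [h0]
  rw [Finset.sum_congr rfl hterm, Finset.sum_add_distrib, ← Finset.mul_sum,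
    hζ.geom_sum_eq_zero hp.one_lt, Finset.sum_ite_eq' (Finset.range p) 0 (fun _ => (a : ℂ) - ap),
    if_pos (Finset.mem_range.2 hp.pos)]
  ring

/-- Trace of `P·M` for a prime-order permutation matrix `P` simultaneously
diagonalized with `M` (three distinct rational eigenvalues `τ₁, τ₂, τ₃`):
`trace(PM) = τ₁ + (a₁ - a_p)τ₂ + (b₁ - b_p)τ₃`. -/
theorem stmt6 (v p : ℕ) (hp : p.Prime)
    (P M : Matrix (Fin v) (Fin v) ℂ)
    (hperm : ∃ σ : Equiv.Perm (Fin v), ∀ i j, P i j = if σ j = i then 1 else 0)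
    (hPp : P ^ p = 1) (hcomm : P * M = M * P)
    (τ₁ τ₂ τ₃ : ℚ)
    (hτ12 : τ₁ ≠ τ₂) (hτ13 : τ₁ ≠ τ₃) (hτ23 : τ₂ ≠ τ₃)
    (b : Module.Basis (Fin v) ℂ (Fin v → ℂ))
    (μP μM : Fin v → ℂ)
    (hbP : ∀ i, P.mulVec (b i) = μP i • b i)
    (hbM : ∀ i, M.mulVec (b i) = μM i • b i)
    (hμM : ∀ i, μM i = (τ₁ : ℂ) ∨ μM i = (τ₂ : ℂ) ∨ μM i = (τ₃ : ℂ))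
    (i₀ : Fin v) (hi₀M : μM i₀ = (τ₁ : ℂ)) (hi₀P : μP i₀ = 1)
    (huniq : ∀ i, μM i = (τ₁ : ℂ) → i = i₀)
    (a₁ ap b₁ bp : ℕ)
    (ha₁ : a₁ = {i : Fin v | μP i = 1 ∧ μM i = (τ₂ : ℂ)}.ncard)
    (hap : ∀ ξ : ℂ, IsPrimitiveRoot ξ p →
      ap = {i : Fin v | μP i = ξ ∧ μM i = (τ₂ : ℂ)}.ncard)
    (hb₁ : b₁ = {i : Fin v | μP i = 1 ∧ μM i = (τ₃ : ℂ)}.ncard)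
    (hbp : ∀ ξ : ℂ, IsPrimitiveRoot ξ p →
      bp = {i : Fin v | μP i = ξ ∧ μM i = (τ₃ : ℂ)}.ncard) :
    (P * M).trace = (τ₁ : ℂ) + ((a₁ : ℂ) - ap) * (τ₂ : ℂ)
      + ((b₁ : ℂ) - bp) * (τ₃ : ℂ) := by
  haveI : NeZero p := ⟨hp.ne_zero⟩
  have h12 : (τ₁ : ℂ) ≠ (τ₂ : ℂ) := by exact_mod_cast hτ12
  have h13 : (τ₁ : ℂ) ≠ (τ₃ : ℂ) := by exact_mod_cast hτ13
  have h23 : (τ₂ : ℂ) ≠ (τ₃ : ℂ) := by exact_mod_cast hτ23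
  have hpowvec : ∀ (n : ℕ) (i : Fin v), (P ^ n).mulVec (b i) = μP i ^ n • b i := by
    intro n i
    induction n with
    | zero => simp [Matrix.one_mulVec]
    | succ n ih =>
        rw [pow_succ, ← Matrix.mulVec_mulVec, hbP i, Matrix.mulVec_smul, ih, smul_smul,
          ← pow_succ']
  have hroot : ∀ i, μP i ^ p = 1 := by
    intro i
    have h := hpowvec p i
    rw [hPp, Matrix.one_mulVec] at h
    have h2 : (μP i ^ p - 1) • b i = 0 := by rw [sub_smul, one_smul, ← h, sub_self]
    rcases smul_eq_zero.mp h2 with h3 | h3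
    · exact sub_eq_zero.mp h3
    · exact absurd h3 (b.ne_zero i)
  have htr : (P * M).trace = ∑ i, μP i * μM i := by
    have h1 : (P * M).trace = LinearMap.trace ℂ _ (Matrix.toLin' (P * M)) := by
      rw [LinearMap.trace_eq_matrix_trace ℂ (Pi.basisFun ℂ (Fin v)),
        LinearMap.toMatrix_eq_toMatrix', LinearMap.toMatrix'_toLin']
    rw [h1, LinearMap.trace_eq_matrix_trace ℂ b, Matrix.trace]
    apply Finset.sum_congr rfl
    intro i _
    rw [Matrix.diag, LinearMap.toMatrix_apply, Matrix.toLin'_apply, ← Matrix.mulVec_mulVec,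
      hbM i, Matrix.mulVec_smul, hbP i, smul_smul, _root_.map_smul, Module.Basis.repr_self]
    simp [mul_comm]
  have hset : ∀ (ξ : ℂ) (τ : ℚ), {i : Fin v | μP i = ξ ∧ μM i = (τ : ℂ)}.ncard
      = ((Finset.univ.filter (fun i => μM i = (τ : ℂ))).filter (fun i => μP i = ξ)).card := by
    intro ξ τ
    rw [Finset.filter_filter, Set.ncard_eq_toFinset_card']
    congr 1
    ext i
    simp [and_comm]
  have hζ := Complex.isPrimitiveRoot_exp p hp.ne_zero
  set T₂ := Finset.univ.filter (fun i => μM i = (τ₂ : ℂ)) with hT₂def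
  set T₃ := Finset.univ.filter (fun i => μM i = (τ₃ : ℂ)) with hT₃def
  have hsum2 : ∑ i ∈ T₂, μP i = (a₁ : ℂ) - ap :=
    key_sum hp hζ μP hroot T₂ a₁ ap (by rw [ha₁, hset 1 τ₂])
      (fun ξ hξ => by rw [hap ξ hξ, hset ξ τ₂])
  have hsum3 : ∑ i ∈ T₃, μP i = (b₁ : ℂ) - bp :=
    key_sum hp hζ μP hroot T₃ b₁ bp (by rw [hb₁, hset 1 τ₃])
      (fun ξ hξ => by rw [hbp ξ hξ, hset ξ τ₃])
  have hT1 : Finset.univ.filter (fun i => μM i = (τ₁ : ℂ)) = {i₀} := by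
    ext i
    simp only [Finset.mem_filter, Finset.mem_univ, true_and, Finset.mem_singleton]
    exact ⟨fun h => huniq i h, fun h => h ▸ hi₀M⟩
  have hsplit1 := Finset.sum_filter_add_sum_filter_not Finset.univ
    (fun i => μM i = (τ₁ : ℂ)) (fun i => μP i * μM i)
  have hsplit2 := Finset.sum_filter_add_sum_filter_not
    (Finset.univ.filter (fun i => ¬ μM i = (τ₁ : ℂ)))
    (fun i => μM i = (τ₂ : ℂ)) (fun i => μP i * μM i)
  have he2 : (Finset.univ.filter (fun i => ¬ μM i = (τ₁ : ℂ))).filter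
      (fun i => μM i = (τ₂ : ℂ)) = T₂ := by
    rw [hT₂def, Finset.filter_filter]
    apply Finset.filter_congr
    intro i _
    constructor
    · exact fun h => h.2
    · exact fun h => ⟨fun h1 => h12 (h1.symm.trans h), h⟩
  have he3 : (Finset.univ.filter (fun i => ¬ μM i = (τ₁ : ℂ))).filter
      (fun i => ¬ μM i = (τ₂ : ℂ)) = T₃ := by
    rw [hT₃def, Finset.filter_filter]
    apply Finset.filter_congr
    intro i _
    constructor
    · intro h
      rcases hμM i with h1 | h1 | h1
      · exact absurd h1 h.1
      · exact absurd h1 h.2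
      · exact h1
    · exact fun h => ⟨fun h1 => h13 (h1.symm.trans h), fun h2 => h23 (h2.symm.trans h)⟩
  have hs2 : ∑ i ∈ T₂, μP i * μM i = ((a₁ : ℂ) - ap) * (τ₂ : ℂ) := by
    rw [← hsum2, Finset.sum_mul]
    apply Finset.sum_congr rfl
    intro i hi
    rw [hT₂def] at hi
    rw [(Finset.mem_filter.mp hi).2]
  have hs3 : ∑ i ∈ T₃, μP i * μM i = ((b₁ : ℂ) - bp) * (τ₃ : ℂ) := by
    rw [← hsum3, Finset.sum_mul]
    apply Finset.sum_congr rfl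
    intro i hi
    rw [hT₃def] at hi
    rw [(Finset.mem_filter.mp hi).2]
  have hs1 : ∑ i ∈ Finset.univ.filter (fun i => μM i = (τ₁ : ℂ)), μP i * μM i = (τ₁ : ℂ) := by
    rw [hT1, Finset.sum_singleton, hi₀P, hi₀M, one_mul]
  rw [htr, ← hsplit1, ← hsplit2, he2, he3, hs1, hs2, hs3, add_assoc]
end

section
/- There is no regular (100, 33, 8, 12) partial difference set in the abelian group ℤ₄ × ℤ₅ × ℤ₅ all of whose elements have order 20 except for a single element of order 2. More precisely: if D ⊆ ℤ₄ × ℤ₅ × ℤ₅ consists of the unique element of order 2 together with 32 elements of order 20, then no element of order 4 can be written as a difference d₁ - d₂ with d₁, d₂ ∈ D, so D is not a (100,33,8,12) partial difference set (since μ = 12 > 0 requires every non-identity element outside D to be so representable). -/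
open Finset

private abbrev Gp := ZMod 4 × ZMod 5 × ZMod 5

private lemma order2_unique : ∀ y : Gp, y + y = 0 → y = 0 ∨
    y = ((2:ZMod 4),(0:ZMod 5),(0:ZMod 5)) := by decide

private lemma ord_one : addOrderOf (((1:ZMod 4),(0:ZMod 5),(0:ZMod 5)) : Gp) = 4 := by
  rw [addOrderOf_eq_iff (by norm_num)]
  refine ⟨by decide, ?_⟩
  intro m hm hm'
  interval_cases m <;> decide

/-- In `ℤ₄ × ℤ₅ × ℤ₅`, a 33-set `D` consisting of the unique element of order 2
together with 32 elements of order 20 cannot represent any element of order 4 as a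
difference of its elements, hence is not a `(100,33,8,12)` partial difference set. -/
theorem stmt9 (D : Finset (ZMod 4 × ZMod 5 × ZMod 5))
    (hmem : ((2 : ZMod 4), (0 : ZMod 5), (0 : ZMod 5)) ∈ D)
    (hcard : D.card = 33)
    (h20 : ∀ d ∈ D, d ≠ ((2 : ZMod 4), (0 : ZMod 5), (0 : ZMod 5)) →
      addOrderOf d = 20) :
    (∀ x : ZMod 4 × ZMod 5 × ZMod 5, addOrderOf x = 4 →
      ¬ ∃ d₁ ∈ D, ∃ d₂ ∈ D, d₁ - d₂ = x) ∧
    ¬ (∀ x : ZMod 4 × ZMod 5 × ZMod 5, x ≠ 0 → x ∉ D →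
        ((D ×ˢ D).filter fun p => p.1 - p.2 = x).card = 12) := by
  set e2 : Gp := ((2:ZMod 4),(0:ZMod 5),(0:ZMod 5)) with he2
  have hfour : (4:ℕ) • e2 = 0 := by decide
  -- any order-20 element d satisfies 10 • d = e2 and 4 • d ≠ 0
  have hten : ∀ d : Gp, addOrderOf d = 20 → (10:ℕ) • d = e2 := by
    intro d hd
    have h20d : (20:ℕ) • d = 0 :=
      addOrderOf_dvd_iff_nsmul_eq_zero.mp (by rw [hd])
    have hadd : (10:ℕ) • d + (10:ℕ) • d = 0 := by
      rw [← add_nsmul]; exact h20d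
    have hne : (10:ℕ) • d ≠ 0 := by
      intro h
      have := addOrderOf_dvd_iff_nsmul_eq_zero.mpr h
      rw [hd] at this
      omega
    rcases order2_unique _ hadd with h | h
    · exact absurd h hne
    · exact h
  have h4ne : ∀ d : Gp, addOrderOf d = 20 → (4:ℕ) • d ≠ 0 := by
    intro d hd h
    have := addOrderOf_dvd_iff_nsmul_eq_zero.mpr h
    rw [hd] at this
    omega
  have part1 : ∀ x : ZMod 4 × ZMod 5 × ZMod 5, addOrderOf x = 4 →
      ¬ ∃ d₁ ∈ D, ∃ d₂ ∈ D, d₁ - d₂ = x := by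
    intro x hx ⟨d₁, hd₁, d₂, hd₂, hdiff⟩
    have hx4 : (4:ℕ) • x = 0 := by
      have := addOrderOf_nsmul_eq_zero x
      rwa [hx] at this
    have hx2 : (2:ℕ) • x ≠ 0 := by
      intro h
      have := addOrderOf_dvd_iff_nsmul_eq_zero.mpr h
      rw [hx] at this
      omega
    by_cases h1 : d₁ = e2 <;> by_cases h2 : d₂ = e2
    · -- x = 0
      rw [h1, h2, sub_self] at hdiff
      apply hx2
      rw [← hdiff]
      simp
    · -- 4 • x = 4 • e2 - 4 • d₂ = -4 • d₂ ≠ 0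
      have ho2 := h20 d₂ hd₂ h2
      apply h4ne d₂ ho2
      have : (4:ℕ) • x = (4:ℕ) • d₁ - (4:ℕ) • d₂ := by
        rw [← hdiff, smul_sub]
      rw [hx4, h1, hfour] at this
      have := this.symm
      rw [zero_sub, neg_eq_zero] at this
      exact this
    · have ho1 := h20 d₁ hd₁ h1
      apply h4ne d₁ ho1
      have : (4:ℕ) • x = (4:ℕ) • d₁ - (4:ℕ) • d₂ := by
        rw [← hdiff, smul_sub]
      rw [hx4, h2, hfour, sub_zero] at this
      exact this.symm
    · -- both order 20: 10 • x = e2 - e2 = 0, but 10 • x = 2 • x ≠ 0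
      have ho1 := h20 d₁ hd₁ h1
      have ho2 := h20 d₂ hd₂ h2
      have h10 : (10:ℕ) • x = 0 := by
        rw [← hdiff, smul_sub, hten d₁ ho1, hten d₂ ho2, sub_self]
      apply hx2
      have : (10:ℕ) • x = (2:ℕ) • x + (2:ℕ) • ((4:ℕ) • x) := by
        rw [smul_smul, ← add_nsmul]
        norm_num
      rw [hx4, smul_zero, add_zero] at this
      rw [← this]
      exact h10
  refine ⟨part1, ?_⟩
  intro hpds
  set x1 : Gp := ((1:ZMod 4),(0:ZMod 5),(0:ZMod 5)) with hx1
  have hx1ne : x1 ≠ 0 := by decide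
  have hx1nD : x1 ∉ D := by
    intro h
    have := h20 x1 h (by decide)
    rw [ord_one] at this
    omega
  have hcard12 := hpds x1 hx1ne hx1nD
  have hnonempty : ((D ×ˢ D).filter fun p => p.1 - p.2 = x1).Nonempty := by
    rw [← Finset.card_pos, hcard12]
    omega
  obtain ⟨p, hp⟩ := hnonempty
  rw [Finset.mem_filter, Finset.mem_product] at hp
  exact part1 x1 ord_one ⟨p.1, hp.1.1, p.2, hp.1.2, hp.2⟩
end

section
/- Let G = ℤ₂ × ℤ₂ × ℤ₅ × ℤ₅ and let D ⊆ G be a subset closed under multiplication by every integer s coprime to 100 (i.e., d ∈ D implies s·d ∈ D), not containing the identity, with all elements of D of order 5 or 10. Then for any element ι of order 2 in G, the number of ordered pairs (α, β) ∈ D × D with α - β = ι is divisible by 8. Consequently D cannot be a (100, 36, 14, 12) partial difference set (as μ = 12 is not divisible by 8). -/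
open Finset MulAction

abbrev GG10 := ZMod 2 × ZMod 2 × ZMod 5 × ZMod 5

set_option maxRecDepth 4000 in
lemma GG10_exp : ∀ x : GG10, (10 : ℕ) • x = 0 := by decide

lemma GG10_smul_mod (a : ℕ) (x : GG10) : a • x = (a % 10) • x := by
  conv_lhs => rw [← Nat.div_add_mod a 10]
  rw [add_smul, mul_comm, mul_smul, GG10_exp, smul_zero, zero_add]

abbrev K8 := (ZMod 10)ˣ × ℤˣ

instance K8act : SMul K8 (GG10 × GG10) :=
  ⟨fun g p => if g.2 = 1 then ((g.1 : ZMod 10).val • p.1, (g.1 : ZMod 10).val • p.2)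
    else ((g.1 : ZMod 10).val • p.2, (g.1 : ZMod 10).val • p.1)⟩

lemma K8_smul_pos (w : (ZMod 10)ˣ) (q : GG10 × GG10) :
    ((w, (1:ℤˣ)) : K8) • q = ((w : ZMod 10).val • q.1, (w : ZMod 10).val • q.2) :=
  if_pos rfl

lemma K8_smul_neg (w : (ZMod 10)ˣ) (q : GG10 × GG10) :
    ((w, (-1:ℤˣ)) : K8) • q = ((w : ZMod 10).val • q.2, (w : ZMod 10).val • q.1) :=
by
  have hne : (-1:ℤˣ) ≠ 1 := by decide
  exact if_neg hne

lemma val_mul_smul (u v : (ZMod 10)ˣ) (x : GG10) :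
    ((u * v : (ZMod 10)ˣ) : ZMod 10).val • x
      = (u : ZMod 10).val • ((v : ZMod 10).val • x) := by
  rw [smul_smul, GG10_smul_mod, GG10_smul_mod ((u : ZMod 10).val * (v : ZMod 10).val)]
  congr 1
  rw [Units.val_mul, ZMod.val_mul]
  simp [Nat.mod_mod_of_dvd]

instance K8mul : MulAction K8 (GG10 × GG10) where
  one_smul p := by
    have h : (((1 : (ZMod 10)ˣ) : ZMod 10)).val = 1 := by decide
    have := K8_smul_pos 1 p
    rw [h, one_smul, one_smul] at this
    exact this
  mul_smul g h p := by
    obtain ⟨u, e⟩ := g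
    obtain ⟨v, f⟩ := h
    rcases Int.units_eq_one_or e with rfl | rfl <;>
      rcases Int.units_eq_one_or f with rfl | rfl
    · rw [show ((u,(1:ℤˣ)):K8) * (v,1) = (u*v,1) from by rw [Prod.mk_mul_mk, one_mul],
        K8_smul_pos, K8_smul_pos, K8_smul_pos]
      simp only [val_mul_smul]
    · rw [show ((u,(1:ℤˣ)):K8) * (v,-1) = (u*v,-1) from by rw [Prod.mk_mul_mk, one_mul],
        K8_smul_neg, K8_smul_neg, K8_smul_pos]
      simp only [val_mul_smul]
    · rw [show ((u,(-1:ℤˣ)):K8) * (v,1) = (u*v,-1) from by rw [Prod.mk_mul_mk, mul_one],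
        K8_smul_neg, K8_smul_pos, K8_smul_neg]
      simp only [val_mul_smul]
    · rw [show ((u,(-1:ℤˣ)):K8) * (v,-1) = (u*v,1) from by
          rw [Prod.mk_mul_mk]; norm_num,
        K8_smul_pos, K8_smul_neg, K8_smul_neg]
      simp only [val_mul_smul]

lemma unit_facts : ∀ u : (ZMod 10)ˣ,
    (u : ZMod 10).val % 2 = 1 ∧ (u = 1 ∨ ¬ (5 ∣ (u : ZMod 10).val - 1)) := by decide

/-- In `ℤ₂ × ℤ₂ × ℤ₅ × ℤ₅`, if `D` is closed under multiplication by integers coprime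
to 100, avoids the identity, and all its elements have order 5 or 10, then every
element of order 2 is represented as a difference of elements of `D` a number of times
divisible by 8; hence `D` is not a `(100,36,14,12)` partial difference set. -/
theorem stmt10 (D : Finset (ZMod 2 × ZMod 2 × ZMod 5 × ZMod 5))
    (hclosed : ∀ s : ℤ, IsCoprime s 100 → ∀ d ∈ D, s • d ∈ D)
    (h0 : (0 : ZMod 2 × ZMod 2 × ZMod 5 × ZMod 5) ∉ D)
    (hord : ∀ d ∈ D, addOrderOf d = 5 ∨ addOrderOf d = 10) :
    (∀ ι : ZMod 2 × ZMod 2 × ZMod 5 × ZMod 5, addOrderOf ι = 2 →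
      8 ∣ ((D ×ˢ D).filter fun p => p.1 - p.2 = ι).card) ∧
    ¬ (∀ x : ZMod 2 × ZMod 2 × ZMod 5 × ZMod 5, x ≠ 0 → x ∉ D →
        ((D ×ˢ D).filter fun p => p.1 - p.2 = x).card = 12) := by
  have key : ∀ ι : GG10, addOrderOf ι = 2 →
      8 ∣ ((D ×ˢ D).filter fun p => p.1 - p.2 = ι).card := by
    intro ι hι
    set S : Finset (GG10 × GG10) := (D ×ˢ D).filter fun p => p.1 - p.2 = ι with hS
    have two_iota : (2 : ℕ) • ι = 0 := by
      have := addOrderOf_nsmul_eq_zero ι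
      rwa [hι] at this
    have neg_iota : -ι = ι := by
      rw [two_nsmul] at two_iota
      exact neg_eq_of_add_eq_zero_left two_iota
    -- odd multiples fix ι
    have odd_smul : ∀ c : ℕ, c % 2 = 1 → c • ι = ι := by
      intro c hc
      calc c • ι = (2 * (c / 2) + c % 2) • ι := by rw [Nat.div_add_mod]
        _ = (c / 2) • ((2 : ℕ) • ι) + (c % 2) • ι := by
            rw [add_smul, mul_comm, mul_smul]
        _ = ι := by rw [two_iota, smul_zero, zero_add, hc, one_smul]
    -- closure of D under unit multiplication
    have hcop : ∀ u : (ZMod 10)ˣ, ∀ d ∈ D, (u : ZMod 10).val • d ∈ D := by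
      intro u d hd
      have h10 : Nat.Coprime (u : ZMod 10).val 10 := ZMod.val_coe_unit_coprime u
      have h100 : IsCoprime (((u : ZMod 10).val : ℤ)) 100 := by
        rw [show (100 : ℤ) = ((100 : ℕ) : ℤ) by norm_num, Nat.isCoprime_iff_coprime]
        exact Nat.Coprime.mul_right h10 h10
      have := hclosed _ h100 d hd
      rwa [natCast_zsmul] at this
    -- S is invariant
    have mem_S : ∀ p : GG10 × GG10, p ∈ S ↔ p.1 ∈ D ∧ p.2 ∈ D ∧ p.1 - p.2 = ι := by
      intro p
      simp [hS, mem_filter, mem_product, and_assoc]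
    have smul_mem : ∀ (g : K8) (p : GG10 × GG10), p ∈ S → g • p ∈ S := by
      rintro ⟨u, e⟩ p hp
      obtain ⟨hp1, hp2, hpd⟩ := (mem_S p).1 hp
      have hodd := (unit_facts u).1
      rcases Int.units_eq_one_or e with rfl | rfl
      · rw [K8_smul_pos, mem_S]
        refine ⟨hcop u _ hp1, hcop u _ hp2, ?_⟩
        rw [← smul_sub, hpd, odd_smul _ hodd]
      · rw [K8_smul_neg, mem_S]
        refine ⟨hcop u _ hp2, hcop u _ hp1, ?_⟩
        rw [← smul_sub, show p.2 - p.1 = -ι by rw [← hpd]; abel, neg_iota,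
          odd_smul _ hodd]
    -- the invariant submodule
    let sub : SubMulAction K8 (GG10 × GG10) := ⟨↑S, fun g {p} hp => smul_mem g p hp⟩
    haveI : Fintype ↥sub := Fintype.ofFinset S fun x => Iff.rfl
    haveI : Fintype (Quotient (orbitRel K8 ↥sub)) :=
      Fintype.ofFinite _
    haveI : ∀ g : K8, Fintype (fixedBy ↥sub g) := fun g => Fintype.ofFinite _
    -- freeness
    have free : ∀ g : K8, g ≠ 1 → ∀ x : ↥sub, g • x ≠ x := by
      rintro ⟨u, e⟩ hg ⟨p, hp⟩ hfix
      have hp' : p ∈ S := hp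
      obtain ⟨hp1, hp2, hpd⟩ := (mem_S p).1 hp'
      have hodd := (unit_facts u).1
      have hfixp : ((u, e) : K8) • p = p := congrArg Subtype.val hfix
      rcases Int.units_eq_one_or e with rfl | rfl
      · have hu : u ≠ 1 := fun h => hg (by rw [h]; rfl)
        have hdvd : ¬ (5 ∣ (u : ZMod 10).val - 1) := by
          rcases (unit_facts u).2 with h | h
          · exact absurd h hu
          · exact h
        rw [K8_smul_pos] at hfixp
        have h1 : (u : ZMod 10).val • p.1 = p.1 := congrArg Prod.fst hfixp
        have hc1 : 1 ≤ (u : ZMod 10).val := by omega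
        rw [← Nat.sub_add_cancel hc1, add_smul, one_smul] at h1
        have h0' : ((u : ZMod 10).val - 1) • p.1 = 0 := by
          have := add_eq_right.mp h1
          exact this
        have h5 : (5 : ℕ) ∣ addOrderOf p.1 := by
          rcases hord p.1 hp1 with h | h <;> rw [h] <;> norm_num
        exact hdvd (h5.trans (addOrderOf_dvd_of_nsmul_eq_zero h0'))
      · rw [K8_smul_neg] at hfixp
        have h1 : (u : ZMod 10).val • p.1 = p.2 := congrArg Prod.snd hfixp
        have h5 : (5 : ℕ) • ι = 0 := by
          have : ι = p.1 - (u : ZMod 10).val • p.1 := by rw [h1, hpd]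
          rw [this, smul_sub, smul_smul, GG10_smul_mod (5 * (u : ZMod 10).val),
            show 5 * (u : ZMod 10).val % 10 = 5 by omega, sub_self]
        have := addOrderOf_dvd_of_nsmul_eq_zero h5
        rw [hι] at this
        omega
    -- Burnside
    have burnside := sum_card_fixedBy_eq_card_orbits_mul_card_group K8 ↥sub
    have hzero : ∀ g ∈ (univ : Finset K8), g ≠ 1 → Fintype.card (fixedBy ↥sub g) = 0 := by
      intro g _ hg
      rw [Fintype.card_eq_zero_iff]
      exact ⟨fun x => free g hg x.1 x.2⟩
    rw [Finset.sum_eq_single_of_mem 1 (mem_univ 1) hzero] at burnside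
    have hone : Fintype.card (fixedBy ↥sub (1 : K8)) = S.card := by
      have huniv : fixedBy ↥sub (1 : K8) = Set.univ := by
        ext x; simp [mem_fixedBy]
      have e : ↑(fixedBy ↥sub (1 : K8)) ≃ ↥sub :=
        (Equiv.setCongr huniv).trans (Equiv.Set.univ _)
      rw [Fintype.card_congr e, ← Fintype.card_coe S]
      exact Fintype.card_congr (Equiv.subtypeEquivRight fun x => Iff.rfl)
    have hK : Fintype.card K8 = 8 := by
      rw [Fintype.card_prod, Fintype.card_units_int, ZMod.card_units_eq_totient]
      decide
    rw [hone, hK] at burnside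
    exact ⟨Fintype.card (Quotient (orbitRel K8 ↥sub)), by omega⟩
  refine ⟨key, ?_⟩
  intro hpds
  set ι : GG10 := ((1 : ZMod 2), (0 : ZMod 2), (0 : ZMod 5), (0 : ZMod 5)) with hιdef
  have hne : ι ≠ 0 := by decide
  have h2 : (2 : ℕ) • ι = 0 := by decide
  haveI : Fact (Nat.Prime 2) := ⟨Nat.prime_two⟩
  have hι : addOrderOf ι = 2 := addOrderOf_eq_prime h2 hne
  have hnotD : ι ∉ D := by
    intro h
    rcases hord ι h with h5 | h10 <;> rw [hι] at * <;> omega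
  have h12 := hpds ι hne hnotD
  have h8 := key ι hι
  rw [h12] at h8
  omega
end

section
/- Let A be the adjacency matrix of a strongly regular graph srg(v,k,λ,μ) with λ ≠ μ and Δ = (λ-μ)² + 4(k-μ). If 2k + (v-1)(λ-μ) ≠ 0, then the non-trivial eigenvalue multiplicities m₂ = (1/2)(v - 1 - (2k+(v-1)(λ-μ))/√Δ) and m₃ = (1/2)(v - 1 + (2k+(v-1)(λ-μ))/√Δ) are positive integers, and hence √Δ is rational, so Δ is a perfect square and the eigenvalues ν₂ = (λ-μ+√Δ)/2 and ν₃ = (λ-μ-√Δ)/2 are integers. -/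
open Matrix Finset

lemma count2aux {v : ℕ} (f : Fin v → ℝ) (a b : ℝ) (hab : a ≠ b)
    (hf : ∀ i, f i = a ∨ f i = b) (g : ℝ → ℝ) :
    ∑ i, g (f i) = (univ.filter (fun i => f i = a)).card • g a
      + (univ.filter (fun i => f i = b)).card • g b := by
  classical
  rw [← Finset.sum_filter_add_sum_filter_not univ (fun i => f i = a)]
  congr 1
  · rw [Finset.sum_congr rfl (fun i hi => by rw [(Finset.mem_filter.1 hi).2]),
      Finset.sum_const]
  · have h : univ.filter (fun i => ¬ f i = a) = univ.filter (fun i => f i = b) := by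
      ext i; simp only [Finset.mem_filter, Finset.mem_univ, true_and]
      rcases hf i with h | h <;> simp [h, hab, Ne.symm hab]
    rw [h, Finset.sum_congr rfl (fun i hi => by rw [(Finset.mem_filter.1 hi).2]),
      Finset.sum_const]

lemma count3aux {v : ℕ} (f : Fin v → ℝ) (a b c : ℝ) (hab : a ≠ b) (hac : a ≠ c) (hbc : b ≠ c)
    (hf : ∀ i, f i = a ∨ f i = b ∨ f i = c) (g : ℝ → ℝ) :
    ∑ i, g (f i) = (univ.filter (fun i => f i = a)).card • g a
      + (univ.filter (fun i => f i = b)).card • g b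
      + (univ.filter (fun i => f i = c)).card • g c := by
  classical
  rw [← Finset.sum_filter_add_sum_filter_not univ (fun i => f i = a)]
  have h1 : ∑ i ∈ univ.filter (fun i => f i = a), g (f i)
      = (univ.filter (fun i => f i = a)).card • g a := by
    rw [Finset.sum_congr rfl (fun i hi => by rw [(Finset.mem_filter.1 hi).2]),
      Finset.sum_const]
  rw [h1, add_assoc]
  congr 1
  rw [← Finset.sum_filter_add_sum_filter_not (univ.filter (fun i => ¬ f i = a))
    (fun i => f i = b)]
  have h2 : (univ.filter (fun i => ¬ f i = a)).filter (fun i => f i = b)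
      = univ.filter (fun i => f i = b) := by
    ext i; simp only [Finset.mem_filter, Finset.mem_univ, true_and]
    constructor
    · tauto
    · intro h; exact ⟨by rw [h]; exact Ne.symm hab, h⟩
  have h3 : (univ.filter (fun i => ¬ f i = a)).filter (fun i => ¬ f i = b)
      = univ.filter (fun i => f i = c) := by
    ext i; simp only [Finset.mem_filter, Finset.mem_univ, true_and]
    constructor
    · rintro ⟨ha, hb⟩; rcases hf i with h | h | h <;> tauto
    · intro h; exact ⟨by rw [h]; exact Ne.symm hac, by rw [h]; exact Ne.symm hbc⟩
  rw [h2, h3]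
  congr 1
  · rw [Finset.sum_congr rfl (fun i hi => by rw [(Finset.mem_filter.1 hi).2]),
      Finset.sum_const]
  · rw [Finset.sum_congr rfl (fun i hi => by rw [(Finset.mem_filter.1 hi).2]),
      Finset.sum_const]

lemma conj_mul_aux {n : ℕ} (U X Y : Matrix (Fin n) (Fin n) ℝ) (h : U * star U = 1) :
    star U * (X * Y) * U = (star U * X * U) * (star U * Y * U) := by
  have h2 : (star U * X * U) * (star U * Y * U) = star U * X * ((U * star U) * (Y * U)) := by
    simp only [mul_assoc]
  rw [h2, h, one_mul]
  simp only [mul_assoc]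

lemma spec_package {v : ℕ} (B : Matrix (Fin v) (Fin v) ℝ) (hB : B.IsHermitian) :
    ∃ eig : Fin v → ℝ,
      ((∑ i, eig i) = Matrix.trace B) ∧
      ((∑ i, (eig i)^2) = Matrix.trace (B*B)) ∧
      (∀ p q r : ℝ, (B - p•1) * (B*B - q•B - r•1) = 0 →
        ∀ i, (eig i - p) * ((eig i)^2 - q*eig i - r) = 0) ∧
      (∀ q r : ℝ, B*B - q•B - r•(1 : Matrix (Fin v) (Fin v) ℝ) = 0 →
        ∀ i, (eig i)^2 - q*eig i - r = 0) := by
  classical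
  set U : Matrix (Fin v) (Fin v) ℝ := (hB.eigenvectorUnitary : Matrix (Fin v) (Fin v) ℝ) with hUdef
  have hU1 : star U * U = 1 := Unitary.coe_star_mul_self hB.eigenvectorUnitary
  have hU2 : U * star U = 1 := Unitary.coe_mul_star_self hB.eigenvectorUnitary
  set eig := hB.eigenvalues with heig
  have conj : star U * B * U = diagonal eig := by
    have := hB.conjStarAlgAut_star_eigenvectorUnitary
    simpa [hUdef, RCLike.ofReal_real_eq_id] using this
  have hBB : star U * (B * B) * U = diagonal (fun i => (eig i)^2) := by
    rw [conj_mul_aux _ _ _ hU2, conj, Matrix.diagonal_mul_diagonal]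
    congr 1
    funext i
    simp [sq]
  have hD1 : ∀ p : ℝ, star U * (B - p•1) * U = diagonal (fun i => eig i - p) := by
    intro p
    have h : star U * (B - p•1) * U = star U * B * U - p • (star U * U) := by
      rw [Matrix.mul_sub, Matrix.sub_mul]
      congr 1
      rw [Matrix.mul_smul, Matrix.smul_mul, mul_one]
    rw [h, hU1, conj]
    ext a b
    by_cases hab : a = b <;>
      simp [Matrix.diagonal_apply, Matrix.one_apply, hab, Matrix.sub_apply, Matrix.smul_apply]
  have hD2 : ∀ q r : ℝ, star U * (B*B - q•B - r•1) * U
      = diagonal (fun i => (eig i)^2 - q * eig i - r) := by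
    intro q r
    have h : star U * (B*B - q•B - r•1) * U
        = star U * (B*B) * U - q • (star U * B * U) - r • (star U * U) := by
      rw [Matrix.mul_sub, Matrix.sub_mul, Matrix.mul_sub, Matrix.sub_mul]
      congr 2
      · rw [Matrix.mul_smul, Matrix.smul_mul]
      · rw [Matrix.mul_smul, Matrix.smul_mul, mul_one]
    rw [h, hU1, hBB, conj]
    ext a b
    by_cases hab : a = b <;>
      simp [Matrix.diagonal_apply, Matrix.one_apply, hab, Matrix.sub_apply, Matrix.smul_apply]
  refine ⟨eig, ?_, ?_, ?_, ?_⟩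
  · have h : Matrix.trace (star U * B * U) = Matrix.trace B := by
      rw [Matrix.trace_mul_cycle, hU2, one_mul]
    rw [← h, conj, Matrix.trace_diagonal]
  · have h : Matrix.trace (star U * (B*B) * U) = Matrix.trace (B*B) := by
      rw [Matrix.trace_mul_cycle, hU2, one_mul]
    rw [← h, hBB, Matrix.trace_diagonal]
  · intro p q r hann i
    have h0 : (diagonal (fun i => eig i - p)) * (diagonal (fun i => (eig i)^2 - q * eig i - r))
        = 0 := by
      rw [← hD1, ← hD2, ← conj_mul_aux _ _ _ hU2, hann]
      simp
    have h1 := congrArg (fun M => M i i) h0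
    simpa [Matrix.diagonal_mul_diagonal, Matrix.diagonal_apply] using h1
  · intro q r hann i
    have h0 : diagonal (fun i => (eig i)^2 - q * eig i - r) = 0 := by
      rw [← hD2, hann]
      simp
    have h1 := congrArg (fun M => M i i) h0
    simpa [Matrix.diagonal_apply] using h1

set_option maxHeartbeats 2000000 in
/-- For a (non-complete, non-empty) strongly regular graph with `λ ≠ μ` and
`2k + (v-1)(λ-μ) ≠ 0`, the multiplicities `m₂, m₃` are positive integers, `Δ` is a
perfect square, and the eigenvalues `ν₂, ν₃` are integers. -/
theorem stmt12 (v : ℕ) (k lam mu : ℤ) (A : Matrix (Fin v) (Fin v) ℤ)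
    (hA01 : ∀ i j, A i j = 0 ∨ A i j = 1)
    (hAsymm : A.IsSymm)
    (hAdiag : ∀ i, A i i = 0)
    (hreg : ∀ i, ∑ j, A i j = k)
    (hsrg : A * A = k • (1 : Matrix (Fin v) (Fin v) ℤ) + lam • A
      + mu • (Matrix.of (fun _ _ => (1 : ℤ)) - 1 - A))
    (hnoncomplete : ∃ i j, i ≠ j ∧ A i j = 0)
    (hnonempty : ∃ i j, A i j = 1)
    (hlm : lam ≠ mu)
    (hne : 2 * k + ((v : ℤ) - 1) * (lam - mu) ≠ 0) :
    ∃ s : ℤ, 0 < s ∧ s ^ 2 = (lam - mu) ^ 2 + 4 * (k - mu) ∧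
      ∃ m₂ m₃ : ℤ, 0 < m₂ ∧ 0 < m₃ ∧
        2 * m₂ * s = ((v : ℤ) - 1) * s - (2 * k + ((v : ℤ) - 1) * (lam - mu)) ∧
        2 * m₃ * s = ((v : ℤ) - 1) * s + (2 * k + ((v : ℤ) - 1) * (lam - mu)) ∧
        ∃ ν₂ ν₃ : ℤ, 2 * ν₂ = lam - mu + s ∧ 2 * ν₃ = lam - mu - s := by
  classical
  obtain ⟨i₀, j₀, hij₀⟩ := hnonempty
  obtain ⟨ic, jc, hcne, hc0⟩ := hnoncomplete
  have hA0 : ∀ i j, (0:ℤ) ≤ A i j := fun i j => by rcases hA01 i j with h|h <;> simp [h]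
  have hA1 : ∀ i j, A i j ≤ 1 := fun i j => by rcases hA01 i j with h|h <;> simp [h]
  -- k ≥ 1
  have hk1 : 1 ≤ k := by
    rw [← hreg i₀]
    calc (1:ℤ) = A i₀ j₀ := hij₀.symm
      _ ≤ ∑ j, A i₀ j := Finset.single_le_sum (fun j _ => hA0 i₀ j) (Finset.mem_univ j₀)
  have hv2 : 2 ≤ v := by
    have : Nontrivial (Fin v) := ⟨⟨ic, jc, hcne⟩⟩
    have h := Fintype.one_lt_card (α := Fin v)
    simp at h; omega
  -- k ≤ v - 2
  have hkv2 : k ≤ (v:ℤ) - 2 := by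
    have h1 : ∑ j, A ic j = A ic ic + ∑ j ∈ univ.erase ic, A ic j :=
      (Finset.add_sum_erase univ _ (Finset.mem_univ ic)).symm
    have h2 : ∑ j ∈ univ.erase ic, A ic j
        = A ic jc + ∑ j ∈ (univ.erase ic).erase jc, A ic j :=
      (Finset.add_sum_erase _ _ (Finset.mem_erase.2 ⟨Ne.symm hcne, Finset.mem_univ jc⟩)).symm
    have h3 : ∑ j ∈ (univ.erase ic).erase jc, A ic j
        ≤ ((univ.erase ic).erase jc).card • (1:ℤ) :=
      Finset.sum_le_card_nsmul _ _ _ (fun j _ => hA1 ic j)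
    have hcard : ((univ.erase ic).erase jc).card = v - 2 := by
      rw [Finset.card_erase_of_mem (Finset.mem_erase.2 ⟨Ne.symm hcne, Finset.mem_univ jc⟩),
        Finset.card_erase_of_mem (Finset.mem_univ ic)]
      rw [Finset.card_univ, Fintype.card_fin]
      omega
    have := hreg ic
    rw [h1, h2, hAdiag ic, hc0, zero_add, zero_add] at this
    rw [← this]
    calc ∑ j ∈ (univ.erase ic).erase jc, A ic j ≤ ((v-2 : ℕ) : ℤ) := by
          rw [← hcard]; simpa using h3
      _ = (v:ℤ) - 2 := by push_cast [Nat.cast_sub hv2]; ring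
  have hv3 : (3:ℤ) ≤ (v:ℤ) := by linarith
  -- diagonal of A²
  have hdiag2 : ∀ i, (A*A) i i = k := by
    intro i
    have h := congrArg (fun M => M i i) hsrg
    simp only [Matrix.add_apply, Matrix.sub_apply, Matrix.smul_apply, Matrix.one_apply,
      Matrix.of_apply, smul_eq_mul, if_pos rfl, if_true] at h
    rw [h, hAdiag i]; ring
  -- value of mu
  have hmuval : (A*A) ic jc = mu := by
    have h := congrArg (fun M => M ic jc) hsrg
    simp only [Matrix.add_apply, Matrix.sub_apply, Matrix.smul_apply, Matrix.one_apply,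
      Matrix.of_apply, smul_eq_mul, if_neg hcne, if_false] at h
    rw [h, hc0]; ring
  have hmu0 : 0 ≤ mu := by
    rw [← hmuval, Matrix.mul_apply]
    exact Finset.sum_nonneg (fun l _ => mul_nonneg (hA0 ic l) (hA0 l jc))
  have hmuk : mu ≤ k := by
    rw [← hmuval, Matrix.mul_apply, ← hreg ic]
    refine Finset.sum_le_sum (fun l _ => ?_)
    calc A ic l * A l jc ≤ A ic l * 1 := mul_le_mul_of_nonneg_left (hA1 l jc) (hA0 ic l)
      _ = A ic l := mul_one _
  -- parameter relation
  have hrel : k^2 = k + lam*k + mu*((v:ℤ)-1-k) := by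
    have h1 : ∑ j, (A*A) i₀ j = k^2 := by
      calc ∑ j, (A*A) i₀ j = ∑ j, ∑ l, A i₀ l * A l j := by
            simp [Matrix.mul_apply]
        _ = ∑ l, ∑ j, A i₀ l * A l j := Finset.sum_comm
        _ = ∑ l, A i₀ l * k := by
            refine Finset.sum_congr rfl (fun l _ => ?_)
            rw [← Finset.mul_sum, hreg l]
        _ = k^2 := by rw [← Finset.sum_mul, hreg i₀, sq]
    have h2 : ∑ j, (A*A) i₀ j = k + lam*k + mu*((v:ℤ)-1-k) := by
      rw [hsrg]
      simp only [Matrix.add_apply, Matrix.sub_apply, Matrix.smul_apply, Matrix.one_apply,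
        Matrix.of_apply, smul_eq_mul]
      rw [Finset.sum_add_distrib, Finset.sum_add_distrib]
      have e1 : ∑ j, k * (if i₀ = j then (1:ℤ) else 0) = k := by
        simp [mul_ite, mul_one, mul_zero, Finset.sum_ite_eq]
      have e2 : ∑ j, lam * A i₀ j = lam * k := by rw [← Finset.mul_sum, hreg i₀]
      have e3 : ∑ j, mu * (1 - (if i₀ = j then (1:ℤ) else 0) - A i₀ j)
          = mu * ((v:ℤ)-1-k) := by
        rw [← Finset.mul_sum]
        congr 1
        rw [Finset.sum_sub_distrib, Finset.sum_sub_distrib]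
        simp [Finset.sum_ite_eq, hreg i₀]
      rw [e1, e2, e3]
    linarith [h1, h2]
  -- all-ones matrix facts over ℤ
  set J : Matrix (Fin v) (Fin v) ℤ := Matrix.of (fun _ _ => (1:ℤ)) with hJdef
  have hAJ : A * J = k • J := by
    ext i j
    simp [Matrix.mul_apply, hJdef, hreg i]
  have hq : A*A - (lam - mu) • A - (k - mu) • (1 : Matrix (Fin v) (Fin v) ℤ) = mu • J := by
    rw [hsrg]
    ext i j
    simp only [Matrix.add_apply, Matrix.sub_apply, Matrix.smul_apply, Matrix.one_apply,
      Matrix.of_apply, smul_eq_mul, hJdef]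
    by_cases hij : i = j <;> simp [hij] <;> ring
  have hannZ : (A - k • (1 : Matrix (Fin v) (Fin v) ℤ))
      * (A*A - (lam - mu) • A - (k - mu) • (1 : Matrix (Fin v) (Fin v) ℤ)) = 0 := by
    rw [hq, Matrix.mul_smul, Matrix.sub_mul, Matrix.smul_mul, one_mul, hAJ, sub_self, smul_zero]
  -- cast smul to intCast matrices over ℤ
  have hcastZ : ∀ n : ℤ, n • (1 : Matrix (Fin v) (Fin v) ℤ) = (n : Matrix (Fin v) (Fin v) ℤ) := by
    intro n
    rw [← Matrix.diagonal_intCast]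
    ext i j
    by_cases hij : i = j <;>
      simp [Matrix.diagonal_apply, Matrix.one_apply, hij, Matrix.smul_apply]
  have hsmulZ : ∀ (n : ℤ) (M : Matrix (Fin v) (Fin v) ℤ),
      n • M = (n : Matrix (Fin v) (Fin v) ℤ) * M := by
    intro n M
    rw [← hcastZ n, Matrix.smul_mul, one_mul]
  have hannZ' : (A - (k : Matrix (Fin v) (Fin v) ℤ)) *
      (A*A - ((lam - mu : ℤ) : Matrix (Fin v) (Fin v) ℤ) * A
        - ((k - mu : ℤ) : Matrix (Fin v) (Fin v) ℤ)) = 0 := by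
    have h := hannZ
    rw [hcastZ, hcastZ, hsmulZ] at h
    exact h
  -- map to ℝ
  have hannR0 := congrArg (Int.castRingHom ℝ).mapMatrix hannZ'
  simp only [_root_.map_mul, _root_.map_sub, map_intCast, _root_.map_zero] at hannR0
  set B : Matrix (Fin v) (Fin v) ℝ := (Int.castRingHom ℝ).mapMatrix A with hBdef
  have hBent : ∀ i j, B i j = (A i j : ℝ) := by
    intro i j
    simp [hBdef, RingHom.mapMatrix_apply, Matrix.map_apply]
  have hBsymm : B.IsHermitian := by
    ext i j
    have hs := congrArg (fun M => M i j) hAsymm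
    simp only [Matrix.transpose_apply] at hs
    simp only [Matrix.conjTranspose_apply, hBent, star_trivial]
    exact_mod_cast hs
  have hcastM : ∀ n : ℤ, ((n : ℤ) : Matrix (Fin v) (Fin v) ℝ)
      = (n:ℝ) • (1 : Matrix (Fin v) (Fin v) ℝ) := by
    intro n
    rw [← Matrix.diagonal_intCast]
    ext i j
    by_cases hij : i = j <;>
      simp [Matrix.diagonal_apply, Matrix.one_apply, hij, Matrix.smul_apply]
  have hannR : (B - (k:ℝ)•1) * (B*B - ((lam:ℝ)-(mu:ℝ))•B - ((k:ℝ)-(mu:ℝ))•1) = 0 := by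
    rw [hcastM, hcastM, hcastM, Matrix.smul_mul, one_mul] at hannR0
    have h2 : ((lam - mu : ℤ):ℝ) = (lam:ℝ)-(mu:ℝ) := by push_cast; ring
    have h3 : ((k - mu : ℤ):ℝ) = (k:ℝ)-(mu:ℝ) := by push_cast; ring
    rw [h2, h3] at hannR0
    exact hannR0
  -- traces
  have htrB : Matrix.trace B = 0 := by
    simp [Matrix.trace, Matrix.diag, hBent, hAdiag]
  have htrBB : Matrix.trace (B*B) = (v:ℝ) * (k:ℝ) := by
    have hBBent : ∀ i, (B*B) i i = (((A*A) i i : ℤ) : ℝ) := by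
      intro i
      rw [hBdef, ← _root_.map_mul]
      simp [RingHom.mapMatrix_apply, Matrix.map_apply]
    have h0 : Matrix.trace (B*B) = ∑ i, (B*B) i i := rfl
    rw [h0]
    rw [Finset.sum_congr rfl (fun i _ => by rw [hBBent i, hdiag2 i])]
    simp [Finset.card_univ, mul_comm]
  obtain ⟨eig, htr1, htr2, hcubic, hquad⟩ := spec_package B hBsymm
  have hk1R : (1:ℝ) ≤ (k:ℝ) := by exact_mod_cast hk1
  have hkv2R : (k:ℝ) ≤ (v:ℝ) - 2 := by
    have h0 : ((k:ℤ):ℝ) ≤ (((v:ℤ) - 2 : ℤ) : ℝ) := by exact_mod_cast hkv2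
    push_cast at h0; linarith
  have hv3R : (3:ℝ) ≤ (v:ℝ) := by exact_mod_cast hv3
  have hcomplR : ∀ w t : ℝ, t = (v:ℝ) - 1 → (k:ℝ) + t*w = 0 →
      (k:ℝ)^2 + t*w^2 = (v:ℝ)*(k:ℝ) → False := by
    intro w t ht h2 h3
    have h4 : t*(k:ℝ)^2 + (t*w)^2 = t*((v:ℝ)*(k:ℝ)) := by linear_combination t*h3
    have hw : t*w = -(k:ℝ) := by linarith
    rw [hw, ht] at h4
    have h6 : (v:ℝ)*(k:ℝ)*((k:ℝ) - (v:ℝ) + 1) = 0 := by linear_combination h4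
    rcases mul_eq_zero.1 h6 with h7 | h7
    · rcases mul_eq_zero.1 h7 with h8 | h8 <;> linarith
    · linarith
  rcases eq_or_ne mu 0 with hmu | hmu
  · -- case mu = 0
    subst hmu
    have hlam : lam = k - 1 := by
      have h0 : k * (k - 1 - lam) = 0 := by linear_combination hrel
      rcases mul_eq_zero.1 h0 with h | h
      · omega
      · omega
    subst hlam
    -- quadratic annihilation
    have hqZ : A*A - (k - 1 - 0) • A - (k - 0) • (1 : Matrix (Fin v) (Fin v) ℤ) = 0 := by
      rw [hq]; simp
    have hqZ' : A*A - ((k - 1 - 0 : ℤ) : Matrix (Fin v) (Fin v) ℤ) * A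
        - ((k - 0 : ℤ) : Matrix (Fin v) (Fin v) ℤ) = 0 := by
      have h := hqZ
      rw [hcastZ, hsmulZ] at h
      exact h
    have hqR0 := congrArg (Int.castRingHom ℝ).mapMatrix hqZ'
    simp only [_root_.map_mul, _root_.map_sub, map_intCast, _root_.map_zero] at hqR0
    have hqR : B*B - ((k - 1 - 0 : ℤ):ℝ)•B - ((k - 0 : ℤ):ℝ)•(1 : Matrix (Fin v) (Fin v) ℝ)
        = 0 := by
      rw [← hBdef] at hqR0
      rw [hcastM, hcastM, Matrix.smul_mul, one_mul] at hqR0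
      exact hqR0
    have heig2 : ∀ i, eig i = (k:ℝ) ∨ eig i = -1 := by
      intro i
      have h := hquad ((k - 1 - 0 : ℤ):ℝ) ((k - 0 : ℤ):ℝ) hqR i
      push_cast at h
      have h2 : (eig i - (k:ℝ)) * (eig i + 1) = 0 := by linear_combination h
      rcases mul_eq_zero.1 h2 with h3 | h3
      · left; linarith [sub_eq_zero.mp h3]
      · right; linarith
    have hKne : (k:ℝ) ≠ -1 := by intro h; linarith
    set m := (univ.filter (fun i => eig i = (k:ℝ))).card with hmdef
    set n := (univ.filter (fun i => eig i = (-1:ℝ))).card with hndef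
    have ceq1 : (m:ℝ) + n = v := by
      have h := count2aux eig (k:ℝ) (-1) hKne heig2 (fun _ => (1:ℝ))
      simp only [smul_eq_mul, mul_one, Finset.sum_const, Finset.card_univ,
        Fintype.card_fin, nsmul_eq_mul] at h
      linarith [h]
    have ceq2 : (m:ℝ)*(k:ℝ) - n = 0 := by
      have h := count2aux eig (k:ℝ) (-1) hKne heig2 (fun x => x)
      simp only [nsmul_eq_mul] at h
      rw [htr1, htrB] at h
      linarith [h]
    have hMN : (m:ℤ) + (n:ℤ) = (v:ℤ) := by exact_mod_cast ceq1
    have hN : (m:ℤ) * k = (n:ℤ) := by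
      have h0 : (m:ℝ)*(k:ℝ) = (n:ℝ) := by linarith
      exact_mod_cast h0
    have hm1 : 1 ≤ (m:ℤ) := by
      rcases Nat.eq_zero_or_pos m with h | h
      · exfalso
        rw [h] at hN hMN
        simp at hN
        omega
      · exact_mod_cast h
    have hm2 : 2 ≤ (m:ℤ) := by
      by_contra h
      have hm1' : (m:ℤ) = 1 := by omega
      rw [hm1'] at hN hMN
      omega
    have hn1 : 1 ≤ (n:ℤ) := by
      have h0 : (1:ℤ)*1 ≤ (m:ℤ)*k := mul_le_mul hm1 hk1 (by norm_num) (by omega)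
      linarith [h0, hN]
    refine ⟨k + 1, ?_, ?_, (m:ℤ) - 1, (n:ℤ), ?_, ?_, ?_, ?_, ⟨k, -1, ?_, ?_⟩⟩
    · omega
    · ring
    · omega
    · omega
    · have hv' : (v:ℤ) = m + n := hMN.symm
      rw [hv', ← hN]; ring
    · have hv' : (v:ℤ) = m + n := hMN.symm
      rw [hv', ← hN]; ring
    · ring
    · ring
  · -- case mu ≠ 0
    have hmu1 : 1 ≤ mu := by omega
    have hmu1R : (1:ℝ) ≤ (mu:ℝ) := by exact_mod_cast hmu1
    have hΔpos : (0:ℝ) < ((lam:ℝ)-(mu:ℝ))^2 + 4*((k:ℝ)-(mu:ℝ)) := by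
      have hd0 : (lam:ℝ) - (mu:ℝ) ≠ 0 := by
        intro h
        apply hlm
        have h0 : (lam:ℝ) = (mu:ℝ) := by linarith
        exact_mod_cast h0
      have he0 : (0:ℝ) ≤ (k:ℝ) - (mu:ℝ) := by
        have h0 : (mu:ℝ) ≤ (k:ℝ) := by exact_mod_cast hmuk
        linarith
      have hd2 : (0:ℝ) < ((lam:ℝ)-(mu:ℝ))^2 := by positivity
      linarith
    set sR := Real.sqrt (((lam:ℝ)-(mu:ℝ))^2 + 4*((k:ℝ)-(mu:ℝ))) with hsRdef
    have hsq : sR^2 = ((lam:ℝ)-(mu:ℝ))^2 + 4*((k:ℝ)-(mu:ℝ)) := Real.sq_sqrt hΔpos.le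
    have hspos : 0 < sR := Real.sqrt_pos.2 hΔpos
    set ν₂ : ℝ := (((lam:ℝ)-(mu:ℝ)) + sR)/2 with hν₂def
    set ν₃ : ℝ := (((lam:ℝ)-(mu:ℝ)) - sR)/2 with hν₃def
    have hν₂ : 2*ν₂ = ((lam:ℝ)-(mu:ℝ)) + sR := by rw [hν₂def]; ring
    have hν₃ : 2*ν₃ = ((lam:ℝ)-(mu:ℝ)) - sR := by rw [hν₃def]; ring
    have hfac : ∀ x : ℝ, (x - ν₂) * (x - ν₃)
        = x^2 - ((lam:ℝ)-(mu:ℝ))*x - ((k:ℝ)-(mu:ℝ)) := by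
      intro x
      rw [hν₂def, hν₃def]
      linear_combination (-(1:ℝ)/4) * hsq
    clear_value sR ν₂ ν₃
    have heig3 : ∀ i, eig i = (k:ℝ) ∨ eig i = ν₂ ∨ eig i = ν₃ := by
      intro i
      have h := hcubic (k:ℝ) ((lam:ℝ)-(mu:ℝ)) ((k:ℝ)-(mu:ℝ)) hannR i
      rcases mul_eq_zero.1 h with h1 | h2
      · left; exact sub_eq_zero.mp h1
      · have h3 : (eig i - ν₂) * (eig i - ν₃) = 0 := (hfac (eig i)).trans h2
        rcases mul_eq_zero.1 h3 with h4 | h4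
        · right; left; exact sub_eq_zero.mp h4
        · right; right; exact sub_eq_zero.mp h4
    have hrelR : ((k:ℝ))^2 = (k:ℝ) + (lam:ℝ)*(k:ℝ) + (mu:ℝ)*((v:ℝ)-1-(k:ℝ)) := by
      exact_mod_cast hrel
    have hqK : ((k:ℝ) - ν₂) * ((k:ℝ) - ν₃) = (mu:ℝ) * (v:ℝ) := by
      rw [hfac]
      linear_combination hrelR
    have hmuv : (0:ℝ) < (mu:ℝ) * (v:ℝ) :=
      mul_pos (by linarith) (by linarith)
    have hKν₂ : (k:ℝ) ≠ ν₂ := by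
      intro h
      rw [← h] at hqK
      simp at hqK
      rcases hqK with h0 | h0
      · exact hmu h0
      · omega
    have hKν₃ : (k:ℝ) ≠ ν₃ := by
      intro h
      rw [← h] at hqK
      simp at hqK
      rcases hqK with h0 | h0
      · exact hmu h0
      · omega
    have hν₂ν₃ : ν₂ ≠ ν₃ := by
      intro h
      have h2 : 2*ν₂ = 2*ν₃ := by rw [h]
      linarith [hν₂, hν₃, hspos, h2]
    have hc1 := count3aux eig (k:ℝ) ν₂ ν₃ hKν₂ hKν₃ hν₂ν₃ heig3 (fun _ => (1:ℝ))
    have hc2 := count3aux eig (k:ℝ) ν₂ ν₃ hKν₂ hKν₃ hν₂ν₃ heig3 (fun x => x)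
    have hc3 := count3aux eig (k:ℝ) ν₂ ν₃ hKν₂ hKν₃ hν₂ν₃ heig3 (fun x => x^2)
    set n1 := (univ.filter (fun i => eig i = (k:ℝ))).card with hn1def
    set n2 := (univ.filter (fun i => eig i = ν₂)).card with hn2def
    set n3 := (univ.filter (fun i => eig i = ν₃)).card with hn3def
    clear_value n1 n2 n3
    have eq1 : (n1:ℝ) + n2 + n3 = v := by
      simp only [smul_eq_mul, mul_one, Finset.sum_const, Finset.card_univ,
        Fintype.card_fin, nsmul_eq_mul] at hc1
      linarith [hc1]
    have eq2 : (n1:ℝ)*(k:ℝ) + n2*ν₂ + n3*ν₃ = 0 := by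
      simp only [nsmul_eq_mul] at hc2
      rw [htr1, htrB] at hc2
      linarith [hc2]
    have eq3 : (n1:ℝ)*(k:ℝ)^2 + n2*ν₂^2 + n3*ν₃^2 = (v:ℝ)*(k:ℝ) := by
      simp only [nsmul_eq_mul] at hc3
      rw [htr2, htrBB] at hc3
      linarith [hc3]
    have hq2 : ν₂^2 - ((lam:ℝ)-(mu:ℝ))*ν₂ - ((k:ℝ)-(mu:ℝ)) = 0 := by
      linear_combination - hfac ν₂
    have hq3 : ν₃^2 - ((lam:ℝ)-(mu:ℝ))*ν₃ - ((k:ℝ)-(mu:ℝ)) = 0 := by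
      linear_combination - hfac ν₃
    have hqK2 : (k:ℝ)^2 - ((lam:ℝ)-(mu:ℝ))*(k:ℝ) - ((k:ℝ)-(mu:ℝ)) = (mu:ℝ)*(v:ℝ) :=
      (hfac (k:ℝ)).symm.trans hqK
    have hx0 : ((n1:ℝ) - 1) * ((mu:ℝ)*(v:ℝ)) = 0 := by
      linear_combination eq3 - ((lam:ℝ)-(mu:ℝ))*eq2 - ((k:ℝ)-(mu:ℝ))*eq1
        - (n2:ℝ)*hq2 - (n3:ℝ)*hq3 - (n1:ℝ)*hqK2
    have hn1R : (n1:ℝ) = 1 := by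
      rcases mul_eq_zero.1 hx0 with h | h
      · linarith [sub_eq_zero.mp h]
      · exfalso; linarith
    have eq1' : (n2:ℝ) + n3 = (v:ℝ) - 1 := by linarith
    have eq2' : (k:ℝ) + (n2:ℝ)*ν₂ + (n3:ℝ)*ν₃ = 0 := by
      have h := eq2
      rw [hn1R, one_mul] at h
      linarith
    have eq3' : (k:ℝ)^2 + (n2:ℝ)*ν₂^2 + (n3:ℝ)*ν₃^2 = (v:ℝ)*(k:ℝ) := by
      have h := eq3
      rw [hn1R, one_mul] at h
      linarith
    have h2y : 2*(n2:ℝ)*sR = ((v:ℝ)-1)*sR - (2*(k:ℝ) + ((v:ℝ)-1)*((lam:ℝ)-(mu:ℝ))) := by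
      linear_combination (sR - ((lam:ℝ)-(mu:ℝ)))*eq1' + 2*eq2' - (n2:ℝ)*hν₂ - (n3:ℝ)*hν₃
    have h2z : 2*(n3:ℝ)*sR = ((v:ℝ)-1)*sR + (2*(k:ℝ) + ((v:ℝ)-1)*((lam:ℝ)-(mu:ℝ))) := by
      linear_combination 2*sR*eq1' - h2y
    have hn2pos : n2 ≠ 0 := by
      intro h0
      have hy : (n2:ℝ) = 0 := by exact_mod_cast h0
      have hz : (n3:ℝ) = (v:ℝ) - 1 := by linarith
      apply hcomplR ν₃ ((v:ℝ)-1) rfl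
      · rw [← hz]
        rw [hy, zero_mul, add_zero] at eq2'
        linarith [eq2']
      · rw [← hz]
        rw [hy, zero_mul, add_zero] at eq3'
        linarith [eq3']
    have hn3pos : n3 ≠ 0 := by
      intro h0
      have hz : (n3:ℝ) = 0 := by exact_mod_cast h0
      have hy : (n2:ℝ) = (v:ℝ) - 1 := by linarith
      apply hcomplR ν₂ ((v:ℝ)-1) rfl
      · rw [← hy]
        rw [hz, zero_mul, add_zero] at eq2'
        linarith [eq2']
      · rw [← hy]
        rw [hz, zero_mul, add_zero] at eq3'
        linarith [eq3']
    -- integrality of s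
    set c : ℤ := 2*k + ((v:ℤ) - 1)*(lam - mu) with hcdef
    have hcR : ((c:ℤ):ℝ) = 2*(k:ℝ) + ((v:ℝ)-1)*((lam:ℝ)-(mu:ℝ)) := by
      rw [hcdef]; push_cast; ring
    set t : ℤ := (v:ℤ) - 1 - 2*(n2:ℤ) with htdef
    have htR : ((t:ℤ):ℝ) = (v:ℝ) - 1 - 2*(n2:ℝ) := by rw [htdef]; push_cast; ring
    have htc : ((t:ℤ):ℝ) * sR = ((c:ℤ):ℝ) := by
      rw [htR, hcR]; linarith [h2y]
    have ht0 : t ≠ 0 := by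
      intro h
      apply hne
      have h1 : ((c:ℤ):ℝ) = 0 := by rw [← htc, h]; simp
      have h2 : c = 0 := by exact_mod_cast h1
      rw [hcdef] at h2
      exact h2
    have hc2 : c^2 = ((lam - mu)^2 + 4*(k - mu)) * t^2 := by
      have hR : ((c:ℤ):ℝ)^2 = (((lam:ℝ)-(mu:ℝ))^2 + 4*((k:ℝ)-(mu:ℝ))) * ((t:ℤ):ℝ)^2 := by
        rw [← htc, ← hsq]; ring
      exact_mod_cast hR
    have htdvd : t ∣ c := by
      have h2 : t^2 ∣ c^2 := ⟨(lam - mu)^2 + 4*(k - mu), by linarith [hc2]⟩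
      exact (Int.pow_dvd_pow_iff two_ne_zero).mp h2
    set s₀ : ℤ := c / t with hs₀def
    have hcs : c = t * s₀ := by rw [hs₀def]; exact (Int.mul_ediv_cancel' htdvd).symm
    have hs₀R : ((s₀:ℤ):ℝ) = sR := by
      have h1 : ((t:ℤ):ℝ) * sR = ((t:ℤ):ℝ) * ((s₀:ℤ):ℝ) := by
        rw [htc, hcs]
        push_cast
        ring
      have ht0R : ((t:ℤ):ℝ) ≠ 0 := by exact_mod_cast ht0
      exact (mul_left_cancel₀ ht0R h1).symm
    have hs₀pos : 0 < s₀ := by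
      have h0 : (0:ℝ) < ((s₀:ℤ):ℝ) := by rw [hs₀R]; exact hspos
      exact_mod_cast h0
    have hs₀sq : s₀^2 = (lam - mu)^2 + 4*(k - mu) := by
      have h0 : ((s₀:ℤ):ℝ)^2 = ((lam:ℝ)-(mu:ℝ))^2 + 4*((k:ℝ)-(mu:ℝ)) := by
        rw [hs₀R]; exact hsq
      exact_mod_cast h0
    have hm2eq : 2*(n2:ℤ)*s₀ = ((v:ℤ)-1)*s₀ - c := by
      have hR : 2*((n2:ℕ):ℝ)*((s₀:ℤ):ℝ) = (((v:ℕ):ℝ)-1)*((s₀:ℤ):ℝ) - ((c:ℤ):ℝ) := by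
        rw [hs₀R, hcR]
        push_cast
        linarith [h2y]
      exact_mod_cast hR
    have hm3eq : 2*(n3:ℤ)*s₀ = ((v:ℤ)-1)*s₀ + c := by
      have hR : 2*((n3:ℕ):ℝ)*((s₀:ℤ):ℝ) = (((v:ℕ):ℝ)-1)*((s₀:ℤ):ℝ) + ((c:ℤ):ℝ) := by
        rw [hs₀R, hcR]
        push_cast
        linarith [h2z]
      exact_mod_cast hR
    have hn2p : 0 < (n2:ℤ) := by
      have h0 : 0 < n2 := Nat.pos_of_ne_zero hn2pos
      exact_mod_cast h0
    have hn3p : 0 < (n3:ℤ) := by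
      have h0 : 0 < n3 := Nat.pos_of_ne_zero hn3pos
      exact_mod_cast h0
    -- parity
    have hpar : Even ((lam - mu) + s₀) := by
      rcases Int.even_or_odd ((lam - mu) + s₀) with h | h
      · exact h
      · exfalso
        have hodd1 : Odd ((lam - mu) + s₀) := h
        obtain ⟨a, ha⟩ := h
        have hodd2 : Odd ((lam - mu) - s₀) := ⟨a - s₀, by omega⟩
        have hodd3 : Odd (((lam - mu) + s₀) * ((lam - mu) - s₀)) := hodd1.mul hodd2
        have h4 : ((lam - mu) + s₀) * ((lam - mu) - s₀) = 2 * (-2*(k - mu)) := by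
          linear_combination - hs₀sq
        rw [h4] at hodd3
        exact (Int.not_odd_iff_even.mpr ⟨-2*(k-mu), by ring⟩) hodd3
    obtain ⟨w₂, hw₂⟩ := hpar
    have hpar3 : Even ((lam - mu) - s₀) := ⟨w₂ - s₀, by omega⟩
    obtain ⟨w₃, hw₃⟩ := hpar3
    exact ⟨s₀, hs₀pos, hs₀sq, (n2:ℤ), (n3:ℤ), hn2p, hn3p, hm2eq, hm3eq,
      w₂, w₃, by omega, by omega⟩
end

section
/- If D is a regular (100, 36, 14, 12) partial difference set in an abelian group G of order 100 closed under d ↦ s·d for all s coprime to 100, then D contains no element whose order is a power of 2. Concretely: G of order 100 has at most 3 elements of order a power of 2 (orders 2 or 4); the elements of D of order divisible by 5 lie in orbits of size divisible by 4 under unit multiplication; since |D| = 36 ≡ 0 (mod 4), the number of elements of D of 2-power order is ≡ 0 (mod 4) and at most 3, hence is 0. -/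
open Finset

private lemma orbit4 {α : Type*} [DecidableEq α] (f : α → α)
    (hf : ∀ x, f (f (f (f x))) = x) :
    ∀ s : Finset α, (∀ x ∈ s, f x ∈ s) →
      (∀ x ∈ s, f x ≠ x ∧ f (f x) ≠ x ∧ f (f (f x)) ≠ x) → 4 ∣ s.card := by
  have hinj : Function.Injective f := by
    intro a b h
    have hab : f (f (f (f a))) = f (f (f (f b))) := by rw [h]
    rwa [hf a, hf b] at hab
  intro s
  induction s using Finset.strongInduction with
  | _ s ih =>
    intro hclosed hfix
    rcases s.eq_empty_or_nonempty with rfl | ⟨x, hx⟩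
    · simp
    · obtain ⟨h1, h2, h3⟩ := hfix x hx
      set O : Finset α := {x, f x, f (f x), f (f (f x))} with hO
      have hOsub : O ⊆ s := by
        intro y hy
        simp only [hO, mem_insert, mem_singleton] at hy
        rcases hy with rfl | rfl | rfl | rfl
        · exact hx
        · exact hclosed _ hx
        · exact hclosed _ (hclosed _ hx)
        · exact hclosed _ (hclosed _ (hclosed _ hx))
      have hxfx : x ≠ f x := fun h => h1 h.symm
      have hxf2 : x ≠ f (f x) := fun h => h2 h.symm
      have hxf3 : x ≠ f (f (f x)) := fun h => h3 h.symm
      have hf1f2 : f x ≠ f (f x) := fun h => hxfx (hinj h)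
      have hf1f3 : f x ≠ f (f (f x)) := fun h => hxf2 (hinj h)
      have hf2f3 : f (f x) ≠ f (f (f x)) := fun h => hxfx (hinj (hinj h))
      have hcardO : O.card = 4 := by
        rw [hO]
        rw [card_insert_of_notMem (by simp [hxfx, hxf2, hxf3]),
          card_insert_of_notMem (by simp [hf1f2, hf1f3]),
          card_insert_of_notMem (by simp [hf2f3]), card_singleton]
      have hmemO : ∀ y, y ∈ O ↔ (y = x ∨ y = f x ∨ y = f (f x) ∨ y = f (f (f x))) := by
        intro y; simp [hO]
      have hssub : s \ O ⊂ s := by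
        apply Finset.sdiff_ssubset hOsub
        exact ⟨x, by simp [hO]⟩
      have hclosed' : ∀ y ∈ s \ O, f y ∈ s \ O := by
        intro y hy
        rw [Finset.mem_sdiff] at hy ⊢
        obtain ⟨hys, hyO⟩ := hy
        refine ⟨hclosed _ hys, fun hfyO => hyO ?_⟩
        rw [hmemO] at hfyO ⊢
        rcases hfyO with h | h | h | h
        · right; right; right
          have := hf y
          rw [h] at this
          exact this.symm
        · exact Or.inl (hinj h)
        · exact Or.inr (Or.inl (hinj h))
        · exact Or.inr (Or.inr (Or.inl (hinj h)))
      have h4 := ih (s \ O) hssub hclosed'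
        (fun y hy => hfix y (Finset.mem_sdiff.mp hy).1)
      have := Finset.card_sdiff_add_card_eq_card hOsub
      omega

/-- A regular `(100,36,14,12)` partial difference set in an abelian group of order 100
that is closed under `d ↦ s·d` for all `s` coprime to 100 contains no element of
2-power order. -/
theorem stmt19 (G : Type*) [AddCommGroup G] [Fintype G] [DecidableEq G]
    (hG : Fintype.card G = 100)
    (D : Finset G) (hcard : D.card = 36)
    (h0 : (0 : G) ∉ D) (hinv : ∀ d, d ∈ D ↔ -d ∈ D)
    (hlam : ∀ g ∈ D, ((D ×ˢ D).filter fun p => p.1 - p.2 = g).card = 14)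
    (hmu : ∀ g : G, g ≠ 0 → g ∉ D →
      ((D ×ˢ D).filter fun p => p.1 - p.2 = g).card = 12)
    (hclosed : ∀ s : ℤ, IsCoprime s 100 → ∀ d ∈ D, s • d ∈ D) :
    ∀ d ∈ D, ∀ j : ℕ, addOrderOf d ≠ 2 ^ j := by
  intro d hd j hj
  -- every element is killed by 100
  have h100 : ∀ g : G, (100 : ℤ) • g = 0 := by
    intro g
    have : (100 : ℕ) • g = 0 := by rw [← hG]; exact card_nsmul_eq_zero
    rw [show ((100 : ℤ)) = ((100 : ℕ) : ℤ) by norm_num, natCast_zsmul, this]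
  have h2401 : ∀ g : G, (2401 : ℤ) • g = g := by
    intro g
    have : (2401 : ℤ) = 24 * 100 + 1 := by norm_num
    rw [this, add_smul, mul_smul, h100, smul_zero, one_smul, zero_add]
  -- order of each element divides 100
  have hord100 : ∀ g : G, addOrderOf g ∣ 100 := by
    intro g; rw [← hG]; exact addOrderOf_dvd_card
  -- order divides order under integer scaling
  have hdvd_smul : ∀ (n : ℤ) (g : G), addOrderOf (n • g) ∣ addOrderOf g := by
    intro n g
    apply addOrderOf_dvd_of_nsmul_eq_zero
    rw [smul_comm, addOrderOf_nsmul_eq_zero, smul_zero]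
  -- the map d ↦ 7 • d
  set f : G → G := fun g => (7 : ℤ) • g with hfdef
  have hf4 : ∀ g : G, f (f (f (f g))) = g := by
    intro g
    simp only [hfdef, smul_smul]
    norm_num
    exact h2401 g
  have hforder : ∀ g : G, addOrderOf (f g) = addOrderOf g := by
    intro g
    refine Nat.dvd_antisymm (hdvd_smul 7 g) ?_
    have : g = (343 : ℤ) • f g := by
      simp only [hfdef, smul_smul]
      norm_num
      exact (h2401 g).symm
    calc addOrderOf g = addOrderOf ((343 : ℤ) • f g) := by rw [← this]
      _ ∣ addOrderOf (f g) := hdvd_smul _ _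
  -- the five-part of D
  set S : Finset G := D.filter (fun g => 5 ∣ addOrderOf g) with hS
  set T : Finset G := D.filter (fun g => ¬ 5 ∣ addOrderOf g) with hT
  have hST : S.card + T.card = 36 := by
    rw [hS, hT, Finset.card_filter_add_card_filter_not]
    exact hcard
  -- S is closed under f, and f has no small cycles on S
  have hScl : ∀ x ∈ S, f x ∈ S := by
    intro x hx
    rw [hS, Finset.mem_filter] at hx ⊢
    refine ⟨hclosed 7 ?_ x hx.1, by rw [hforder]; exact hx.2⟩
    rw [Int.isCoprime_iff_gcd_eq_one]; decide
  have hfixfree : ∀ x ∈ S, f x ≠ x ∧ f (f x) ≠ x ∧ f (f (f x)) ≠ x := by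
    intro x hx
    rw [hS, Finset.mem_filter] at hx
    have key : ∀ m : ℕ, ((m : ℤ) + 1) • x = x → addOrderOf x ∣ m := by
      intro m hm
      apply addOrderOf_dvd_of_nsmul_eq_zero
      have : ((m : ℤ) + 1) • x - x = 0 := by rw [hm, sub_self]
      rw [add_smul, one_smul, add_sub_cancel_right] at this
      rwa [← natCast_zsmul]
    refine ⟨fun h => ?_, fun h => ?_, fun h => ?_⟩
    · have := key 6 (by norm_num; exact h)
      have h5 : (5 : ℕ) ∣ 6 := dvd_trans hx.2 this
      norm_num at h5
    · have h49 : ((49 : ℤ)) • x = x := by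
        simpa only [hfdef, smul_smul, show (7:ℤ) * 7 = 49 by norm_num] using h
      have := key 48 (by norm_num; exact h49)
      have h5 : (5 : ℕ) ∣ 48 := dvd_trans hx.2 this
      norm_num at h5
    · have h343 : ((343 : ℤ)) • x = x := by
        simpa only [hfdef, smul_smul, show (7:ℤ) * (7 * 7) = 343 by norm_num] using h
      have := key 342 (by norm_num; exact h343)
      have h5 : (5 : ℕ) ∣ 342 := dvd_trans hx.2 this
      norm_num at h5
  have h4S : 4 ∣ S.card := orbit4 f hf4 S hScl hfixfree
  -- T is contained in the 4-torsion subgroup minus 0, which has ≤ 3 elements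
  have hT4 : ∀ x ∈ T, (4 : ℕ) • x = 0 := by
    intro x hx
    rw [hT, Finset.mem_filter] at hx
    have hdvd : addOrderOf x ∣ 4 := by
      have h1 : addOrderOf x ∣ 100 := hord100 x
      have h2 : ¬ (5 ∣ addOrderOf x) := hx.2
      have hle : addOrderOf x < 101 := Nat.lt_succ_of_le (Nat.le_of_dvd (by norm_num) h1)
      revert h1 h2
      have : ∀ m < 101, m ∣ 100 → ¬ (5 ∣ m) → m ∣ 4 := by decide
      exact this _ hle
    exact addOrderOf_dvd_iff_nsmul_eq_zero.mp hdvd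
  -- the 4-torsion subgroup
  let A : AddSubgroup G := {
    carrier := {x : G | (4 : ℕ) • x = 0}
    zero_mem' := smul_zero 4
    add_mem' := by
      intro a b ha hb
      simp only [Set.mem_setOf_eq] at *
      rw [smul_add, ha, hb, add_zero]
    neg_mem' := by
      intro a ha
      simp only [Set.mem_setOf_eq] at *
      rw [smul_neg, ha, neg_zero] }
  have hpA : IsPGroup 2 (Multiplicative A) := by
    intro g
    refine ⟨2, ?_⟩
    have hg := (Multiplicative.toAdd g).2
    have : (4 : ℕ) • Multiplicative.toAdd g = 0 := by
      apply Subtype.ext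
      simpa using (show (4:ℕ) • ((Multiplicative.toAdd g : A) : G) = 0 from hg)
    have h4 : g ^ (4 : ℕ) = 1 := by
      rw [← Multiplicative.toAdd.injective.eq_iff, toAdd_pow, this]
      rfl
    rw [show (2 : ℕ) ^ 2 = 4 from rfl, h4]
  obtain ⟨n, hn⟩ := IsPGroup.iff_card.mp hpA
  have hcardA : Nat.card A = 2 ^ n := by
    rw [← hn]; rfl
  have hAdvd : Nat.card A ∣ 100 := by
    have := AddSubgroup.card_addSubgroup_dvd_card A
    rwa [Nat.card_eq_fintype_card (α := G), hG] at this
  have hAle : Nat.card A ≤ 4 := by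
    rw [hcardA] at hAdvd ⊢
    have hn2 : n ≤ 2 := by
      by_contra hc
      push_neg at hc
      have : (8 : ℕ) ∣ 2 ^ n := by
        have : (2 : ℕ) ^ 3 ∣ 2 ^ n := Nat.pow_dvd_pow 2 hc
        simpa using this
      have : (8 : ℕ) ∣ 100 := dvd_trans this hAdvd
      norm_num at this
    calc (2 : ℕ) ^ n ≤ 2 ^ 2 := Nat.pow_le_pow_right (by norm_num) hn2
      _ = 4 := rfl
  -- T ∪ {0} injects into A
  have hTsub : insert (0 : G) T ⊆ Finset.univ.filter (fun x : G => (4 : ℕ) • x = 0) := by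
    intro x hx
    rw [Finset.mem_insert] at hx
    rw [Finset.mem_filter]
    rcases hx with rfl | hx
    · exact ⟨Finset.mem_univ _, smul_zero 4⟩
    · exact ⟨Finset.mem_univ _, hT4 x hx⟩
  have hfiltercard : (Finset.univ.filter (fun x : G => (4 : ℕ) • x = 0)).card = Nat.card A := by
    have h1 : Nat.card A = Nat.card {x : G // (4 : ℕ) • x = 0} := rfl
    rw [h1, Nat.card_eq_fintype_card, Fintype.card_subtype]
  have h0T : (0 : G) ∉ T := fun h => h0 (Finset.mem_filter.mp h).1
  have hTcard : T.card + 1 ≤ 4 := by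
    have := Finset.card_le_card hTsub
    rw [Finset.card_insert_of_notMem h0T, hfiltercard] at this
    omega
  -- d is in T
  have hdT : d ∈ T := by
    rw [hT, Finset.mem_filter]
    refine ⟨hd, fun h5 => ?_⟩
    rw [hj] at h5
    have := Nat.Prime.dvd_of_dvd_pow (p := 5) (by norm_num) h5
    norm_num at this
  have hTpos : 1 ≤ T.card := Finset.card_pos.mpr ⟨d, hdT⟩
  omega
end
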